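/- Let $k$ be a field, $S = k[x,y,z,w]$, $n_1, n_2 \ge 2$, $I = (x,y)^{n_1} + (z,w)^{n_2} + (xz-yw)$, and $A = S/I$. For $0 \le i_1 \le n_1 - 2$ and any $i_2$, the multiplication-by-$x$ map $A_{(i_1, i_2)} \to A_{(i_1+1, i_2)}$ between bigraded pieces of $A$ is injective. -/
import Mathlib


open MvPolynomial

namespace Stmt11Aux

variable {k : Type*} [Field k]

lemma mon4' (a b c d : ℕ) (r : k) :
    (monomial (Finsupp.single 0 a + Finsupp.single 1 b + Finsupp.single 2 c
      + Finsupp.single 3 d) r : MvPolynomial (Fin 4) k)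
      = C r * X 0 ^ a * X 1 ^ b * X 2 ^ c * X 3 ^ d := by
  rw [add_assoc, add_assoc, monomial_single_add, monomial_single_add, monomial_single_add,
    ← add_zero (Finsupp.single 3 d), monomial_single_add, monomial_zero']
  ring

lemma m4eq (m : Fin 4 →₀ ℕ) : m = Finsupp.single 0 (m 0) + Finsupp.single 1 (m 1)
    + Finsupp.single 2 (m 2) + Finsupp.single 3 (m 3) := by
  ext i
  fin_cases i <;> simp [Finsupp.single_apply]

lemma mon4 (m : Fin 4 →₀ ℕ) (r : k) :
    (monomial m r : MvPolynomial (Fin 4) k)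
      = C r * X 0 ^ (m 0) * X 1 ^ (m 1) * X 2 ^ (m 2) * X 3 ^ (m 3) := by
  conv_lhs => rw [m4eq m]
  exact mon4' _ _ _ _ r

lemma mon3' (a b c : ℕ) (r : k) :
    (monomial (Finsupp.single 0 a + Finsupp.single 1 b + Finsupp.single 2 c) r
      : MvPolynomial (Fin 3) k) = C r * X 0 ^ a * X 1 ^ b * X 2 ^ c := by
  rw [add_assoc, monomial_single_add, monomial_single_add,
    ← add_zero (Finsupp.single 2 c), monomial_single_add, monomial_zero']
  ring

/-- the parametrization x ↦ yu, y ↦ y, z ↦ z, w ↦ zu of the quadric cone -/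
noncomputable def F (k : Type*) [Field k] : Fin 4 → MvPolynomial (Fin 3) k :=
  ![X 0 * X 2, X 0, X 1, X 1 * X 2]

/-- exponent map induced by the parametrization -/
noncomputable def gexp (m : Fin 4 →₀ ℕ) : Fin 3 →₀ ℕ :=
  Finsupp.single 0 (m 0 + m 1) + Finsupp.single 1 (m 2 + m 3) + Finsupp.single 2 (m 0 + m 3)

lemma gexp_apply0 (m : Fin 4 →₀ ℕ) : gexp m 0 = m 0 + m 1 := by
  simp [gexp, Finsupp.single_apply]
lemma gexp_apply1 (m : Fin 4 →₀ ℕ) : gexp m 1 = m 2 + m 3 := by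
  simp [gexp, Finsupp.single_apply]
lemma gexp_apply2 (m : Fin 4 →₀ ℕ) : gexp m 2 = m 0 + m 3 := by
  simp [gexp, Finsupp.single_apply]

lemma psi_monomial (m : Fin 4 →₀ ℕ) (r : k) :
    aeval (F k) (monomial m r) = monomial (gexp m) r := by
  rw [mon4, gexp, mon3']
  simp only [map_mul, map_pow, aeval_X, aeval_C, algebraMap_eq, F,
    Matrix.cons_val_zero, Matrix.cons_val_one, Matrix.head_cons,
    Matrix.cons_val_two, Matrix.tail_cons, Matrix.cons_val_three]
  ring

lemma weight_eval (m : Fin 4 →₀ ℕ) :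
    Finsupp.weight ![((1:ℕ), (0:ℕ)), (1, 0), (0, 1), (0, 1)] m = (m 0 + m 1, m 2 + m 3) := by
  rw [Finsupp.weight_apply, Finsupp.sum_fintype]
  · simp [Fin.sum_univ_four, Prod.ext_iff]
  · intro i; simp

lemma gexp_inj {v m : Fin 4 →₀ ℕ} (hv : v 0 = 0 ∨ v 2 = 0) (hm : m 0 = 0 ∨ m 2 = 0)
    (h : gexp v = gexp m) : v = m := by
  have h0 : gexp v 0 = gexp m 0 := by rw [h]
  have h1 : gexp v 1 = gexp m 1 := by rw [h]
  have h2 : gexp v 2 = gexp m 2 := by rw [h]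
  simp only [gexp_apply0, gexp_apply1, gexp_apply2] at h0 h1 h2
  ext i
  fin_cases i
  · show v 0 = m 0; omega
  · show v 1 = m 1; omega
  · show v 2 = m 2; omega
  · show v 3 = m 3; omega

/-- normal form exponent: rewrite xz ↦ yw as much as possible -/
noncomputable def nf (m : Fin 4 →₀ ℕ) : Fin 4 →₀ ℕ :=
  Finsupp.single 0 (m 0 - min (m 0) (m 2)) + Finsupp.single 1 (m 1 + min (m 0) (m 2))
    + Finsupp.single 2 (m 2 - min (m 0) (m 2)) + Finsupp.single 3 (m 3 + min (m 0) (m 2))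

lemma nf_apply0 (m : Fin 4 →₀ ℕ) : nf m 0 = m 0 - min (m 0) (m 2) := by
  simp [nf, Finsupp.single_apply]
lemma nf_apply2 (m : Fin 4 →₀ ℕ) : nf m 2 = m 2 - min (m 0) (m 2) := by
  simp [nf, Finsupp.single_apply]

lemma nf_good (m : Fin 4 →₀ ℕ) : nf m 0 = 0 ∨ nf m 2 = 0 := by
  rw [nf_apply0, nf_apply2]; omega

lemma monomial_sub_nf_mem (m : Fin 4 →₀ ℕ) (r : k) :
    (monomial m r : MvPolynomial (Fin 4) k) - monomial (nf m) r
      ∈ Ideal.span {(X 0 * X 2 - X 1 * X 3 : MvPolynomial (Fin 4) k)} := by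
  rw [mon4, nf, mon4']
  obtain ⟨j, a, c, hj, ha, hc, ha', hc'⟩ :
      ∃ j a c, j = min (m 0) (m 2) ∧ m 0 = a + j ∧ m 2 = c + j ∧
        m 0 - min (m 0) (m 2) = a ∧ m 2 - min (m 0) (m 2) = c :=
    ⟨min (m 0) (m 2), m 0 - min (m 0) (m 2), m 2 - min (m 0) (m 2), rfl, by omega, by omega,
      rfl, rfl⟩
  rw [ha', hc', ← hj, Ideal.mem_span_singleton]
  obtain ⟨t, ht⟩ := sub_dvd_pow_sub_pow (X 0 * X 2 : MvPolynomial (Fin 4) k) (X 1 * X 3) j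
  refine ⟨(C r * X 0 ^ a * X 1 ^ (m 1) * X 2 ^ c * X 3 ^ (m 3)) * t, ?_⟩
  rw [ha, hc]
  linear_combination (C r * X 0 ^ a * X 1 ^ (m 1) * X 2 ^ c * X 3 ^ (m 3) :
    MvPolynomial (Fin 4) k) * ht

/-- normal form of a polynomial -/
noncomputable def N (p : MvPolynomial (Fin 4) k) : MvPolynomial (Fin 4) k :=
  ∑ v ∈ p.support, monomial (nf v) (coeff v p)

lemma sub_N_mem (p : MvPolynomial (Fin 4) k) :
    p - N p ∈ Ideal.span {(X 0 * X 2 - X 1 * X 3 : MvPolynomial (Fin 4) k)} := by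
  have h : p - N p = ∑ v ∈ p.support,
      ((monomial v (coeff v p) : MvPolynomial (Fin 4) k) - monomial (nf v) (coeff v p)) := by
    rw [Finset.sum_sub_distrib, ← as_sum p, N]
  rw [h]
  exact Ideal.sum_mem _ fun v _ => monomial_sub_nf_mem v _

lemma N_support_good (p : MvPolynomial (Fin 4) k) :
    ∀ v ∈ (N p).support, v 0 = 0 ∨ v 2 = 0 := by
  intro v hv
  have h := MvPolynomial.support_sum hv
  obtain ⟨m, _, hm⟩ := Finset.mem_biUnion.1 h
  have := support_monomial_subset hm
  rw [Finset.mem_singleton] at this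
  subst this
  exact nf_good m

lemma coeff_psi (q : MvPolynomial (Fin 4) k) (e : Fin 3 →₀ ℕ) :
    coeff e (aeval (F k) q) = ∑ v ∈ q.support, if gexp v = e then coeff v q else 0 := by
  conv_lhs => rw [as_sum q, map_sum]
  rw [MvPolynomial.coeff_sum]
  simp_rw [psi_monomial, coeff_monomial]

lemma good_psi_zero (r : MvPolynomial (Fin 4) k) (hg : ∀ v ∈ r.support, v 0 = 0 ∨ v 2 = 0)
    (h : aeval (F k) r = 0) : r = 0 := by
  by_contra hr
  obtain ⟨m, hm⟩ := exists_coeff_ne_zero hr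
  have hms : m ∈ r.support := mem_support_iff.2 hm
  have key : coeff (gexp m) (aeval (F k) r) = coeff m r := by
    rw [coeff_psi]
    rw [Finset.sum_eq_single m]
    · rw [if_pos rfl]
    · intro v hv hvm
      rw [if_neg]
      exact fun he => hvm (gexp_inj (hg v hv) (hg m hms) he)
    · intro hm'
      exact absurd hms hm'
  rw [h, coeff_zero] at key
  exact hm key.symm

lemma psi_coeff_support {q : MvPolynomial (Fin 4) k} {j1 j2 : ℕ}
    (hq : q.IsWeightedHomogeneous ![((1:ℕ), (0:ℕ)), (1, 0), (0, 1), (0, 1)] (j1, j2))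
    (e : Fin 3 →₀ ℕ) (h : coeff e (aeval (F k) q) ≠ 0) : e 0 = j1 ∧ e 1 = j2 := by
  rw [coeff_psi] at h
  obtain ⟨v, hv, hne⟩ := Finset.exists_ne_zero_of_sum_ne_zero h
  have hvd : gexp v = e := by
    by_contra hc
    rw [if_neg hc] at hne
    exact hne rfl
  have hw := hq (mem_support_iff.1 hv)
  rw [weight_eval] at hw
  have h1 : v 0 + v 1 = j1 := congrArg Prod.fst hw
  have h2 : v 2 + v 3 = j2 := congrArg Prod.snd hw
  subst hvd
  rw [gexp_apply0, gexp_apply1]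
  exact ⟨h1, h2⟩

lemma monomial_mem_pow (m : Fin 4 →₀ ℕ) (c : k) (n : ℕ) (h : n ≤ m 2 + m 3) :
    monomial m c ∈ (Ideal.span {X 2, X 3} : Ideal (MvPolynomial (Fin 4) k)) ^ n := by
  have h2 : (X 2 : MvPolynomial (Fin 4) k) ∈ Ideal.span {X 2, X 3} :=
    Ideal.subset_span (by simp)
  have h3 : (X 3 : MvPolynomial (Fin 4) k) ∈ Ideal.span {X 2, X 3} :=
    Ideal.subset_span (by simp)
  have key : (X 2 : MvPolynomial (Fin 4) k) ^ (m 2) * X 3 ^ (m 3)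
      ∈ (Ideal.span {X 2, X 3} : Ideal (MvPolynomial (Fin 4) k)) ^ (m 2 + m 3) := by
    rw [pow_add]
    exact Ideal.mul_mem_mul (Ideal.pow_mem_pow h2 _) (Ideal.pow_mem_pow h3 _)
  have mem : (X 2 : MvPolynomial (Fin 4) k) ^ (m 2) * X 3 ^ (m 3)
      ∈ (Ideal.span {X 2, X 3} : Ideal (MvPolynomial (Fin 4) k)) ^ n :=
    Ideal.pow_le_pow_right h key
  rw [mon4]
  have hre : (C c : MvPolynomial (Fin 4) k) * X 0 ^ (m 0) * X 1 ^ (m 1) * X 2 ^ (m 2)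
      * X 3 ^ (m 3) = (C c * X 0 ^ (m 0) * X 1 ^ (m 1)) * (X 2 ^ (m 2) * X 3 ^ (m 3)) := by
    ring
  rw [hre]
  exact Ideal.mul_mem_left _ _ mem

lemma coeff_zero_of_mem {n1 n2 : ℕ} {q : MvPolynomial (Fin 3) k}
    (hq : q ∈ Ideal.span {(X 0 : MvPolynomial (Fin 3) k) ^ n1} ⊔ Ideal.span {X 1 ^ n2})
    (e : Fin 3 →₀ ℕ) (he0 : e 0 < n1) (he1 : e 1 < n2) : coeff e q = 0 := by
  obtain ⟨q1, hq1, q2, hq2, rfl⟩ := Submodule.mem_sup.1 hq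
  obtain ⟨a, rfl⟩ := Ideal.mem_span_singleton.1 hq1
  obtain ⟨b, rfl⟩ := Ideal.mem_span_singleton.1 hq2
  rw [coeff_add, mul_comm, mul_comm (X 1 ^ n2), X_pow_eq_monomial, X_pow_eq_monomial,
    coeff_mul_monomial', coeff_mul_monomial', if_neg, if_neg, add_zero]
  · rw [Finsupp.single_le_iff]; omega
  · rw [Finsupp.single_le_iff]; omega

end Stmt11Aux

open Stmt11Aux in
theorem stmt11 (k : Type*) [Field k] (n1 n2 : ℕ) (h1 : 2 ≤ n1) (h2 : 2 ≤ n2)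
    (I : Ideal (MvPolynomial (Fin 4) k))
    (hI : I = (Ideal.span {X 0, X 1}) ^ n1 + (Ideal.span {X 2, X 3}) ^ n2
        + Ideal.span {X 0 * X 2 - X 1 * X 3})
    (w : Fin 4 → ℕ × ℕ) (hw : w = ![(1, 0), (1, 0), (0, 1), (0, 1)])
    (i1 i2 : ℕ) (hi1 : i1 ≤ n1 - 2) :
    ∀ p ∈ weightedHomogeneousSubmodule k w (i1, i2),
      X 0 * p ∈ I → p ∈ I := by
  subst hI hw
  intro p hp hxp
  simp only [Submodule.add_eq_sup] at hxp ⊢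
  have hph : p.IsWeightedHomogeneous ![((1:ℕ), (0:ℕ)), (1, 0), (0, 1), (0, 1)] (i1, i2) := hp
  by_cases hc : n2 ≤ i2
  · -- p is already in (z,w)^n2
    have hmem : p ∈ (Ideal.span {X 2, X 3} : Ideal (MvPolynomial (Fin 4) k)) ^ n2 := by
      rw [as_sum p]
      refine Ideal.sum_mem _ fun v hv => ?_
      have hwv := hph (mem_support_iff.1 hv)
      rw [weight_eval] at hwv
      have h23 : v 2 + v 3 = i2 := congrArg Prod.snd hwv
      exact monomial_mem_pow v _ n2 (by omega)
    exact Submodule.mem_sup_left (Submodule.mem_sup_right hmem)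
  · push_neg at hc
    -- the image ideal
    have hmaple : Ideal.map (aeval (F k))
        ((Ideal.span {(X 0 : MvPolynomial (Fin 4) k), X 1}) ^ n1
          ⊔ (Ideal.span {X 2, X 3}) ^ n2 ⊔ Ideal.span {X 0 * X 2 - X 1 * X 3})
        ≤ Ideal.span {(X 0 : MvPolynomial (Fin 3) k) ^ n1} ⊔ Ideal.span {X 1 ^ n2} := by
      rw [Ideal.map_sup, Ideal.map_sup, Ideal.map_pow, Ideal.map_pow,
        Ideal.map_span, Ideal.map_span, Ideal.map_span]
      refine sup_le (sup_le ?_ ?_) ?_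
      · have hle : Ideal.span ((aeval (F k)) '' {(X 0 : MvPolynomial (Fin 4) k), X 1})
            ≤ Ideal.span {(X 0 : MvPolynomial (Fin 3) k)} := by
          rw [Ideal.span_le]
          rintro q ⟨x, hx, rfl⟩
          rcases hx with rfl | hx
          · simp only [aeval_X, F, Matrix.cons_val_zero]
            exact Ideal.mem_span_singleton.2 (Dvd.intro _ rfl)
          · rw [Set.mem_singleton_iff] at hx
            subst hx
            simp only [aeval_X, F, Matrix.cons_val_one, Matrix.head_cons]
            exact Ideal.mem_span_singleton.2 dvd_rfl
        calc Ideal.span ((aeval (F k)) '' {(X 0 : MvPolynomial (Fin 4) k), X 1}) ^ n1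
            ≤ Ideal.span {(X 0 : MvPolynomial (Fin 3) k)} ^ n1 :=
              Ideal.pow_right_mono hle n1
          _ = Ideal.span {(X 0 : MvPolynomial (Fin 3) k) ^ n1} :=
              Ideal.span_singleton_pow _ _
          _ ≤ _ := le_sup_left
      · have hle : Ideal.span ((aeval (F k)) '' {(X 2 : MvPolynomial (Fin 4) k), X 3})
            ≤ Ideal.span {(X 1 : MvPolynomial (Fin 3) k)} := by
          rw [Ideal.span_le]
          rintro q ⟨x, hx, rfl⟩
          rcases hx with rfl | hx
          · simp only [aeval_X, F, Matrix.cons_val_two, Matrix.tail_cons, Matrix.head_cons]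
            exact Ideal.mem_span_singleton.2 dvd_rfl
          · rw [Set.mem_singleton_iff] at hx
            subst hx
            simp only [aeval_X, F, Matrix.cons_val_three, Matrix.tail_cons, Matrix.head_cons]
            exact Ideal.mem_span_singleton.2 (Dvd.intro _ rfl)
        calc Ideal.span ((aeval (F k)) '' {(X 2 : MvPolynomial (Fin 4) k), X 3}) ^ n2
            ≤ Ideal.span {(X 1 : MvPolynomial (Fin 3) k)} ^ n2 :=
              Ideal.pow_right_mono hle n2
          _ = Ideal.span {(X 1 : MvPolynomial (Fin 3) k) ^ n2} :=
              Ideal.span_singleton_pow _ _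
          _ ≤ _ := le_sup_right
      · rw [Ideal.span_le]
        rintro q ⟨x, hx, rfl⟩
        simp only [Set.mem_singleton_iff] at hx
        subst hx
        have : aeval (F k) ((X 0 : MvPolynomial (Fin 4) k) * X 2 - X 1 * X 3) = 0 := by
          simp only [map_sub, map_mul, aeval_X, F, Matrix.cons_val_zero, Matrix.cons_val_one,
            Matrix.head_cons, Matrix.cons_val_two, Matrix.tail_cons, Matrix.cons_val_three]
          ring
        rw [this]
        exact zero_mem _
    -- ψ(X 0 * p) = 0
    have hxph : (X 0 * p).IsWeightedHomogeneous
        ![((1:ℕ), (0:ℕ)), (1, 0), (0, 1), (0, 1)] (i1 + 1, i2) := by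
      have hx0 : (X 0 : MvPolynomial (Fin 4) k).IsWeightedHomogeneous
          ![((1:ℕ), (0:ℕ)), (1, 0), (0, 1), (0, 1)] ((1:ℕ), (0:ℕ)) :=
        isWeightedHomogeneous_X k _ 0
      have := hx0.mul hph
      have heq : ((1:ℕ), (0:ℕ)) + (i1, i2) = (i1 + 1, i2) := by
        simp [Prod.ext_iff]; omega
      rwa [heq] at this
    have hψxp : aeval (F k) (X 0 * p) = 0 := by
      apply MvPolynomial.ext
      intro e
      rw [coeff_zero]
      by_contra h
      obtain ⟨he0, he1⟩ := psi_coeff_support hxph e h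
      have hin : aeval (F k) (X 0 * p)
          ∈ Ideal.span {(X 0 : MvPolynomial (Fin 3) k) ^ n1} ⊔ Ideal.span {X 1 ^ n2} :=
        hmaple (Ideal.mem_map_of_mem _ hxp)
      exact h (coeff_zero_of_mem hin e (by omega) (by omega))
    have hψp : aeval (F k) p = 0 := by
      rw [map_mul] at hψxp
      rcases mul_eq_zero.1 hψxp with h | h
      · exfalso
        rw [aeval_X] at h
        simp only [F, Matrix.cons_val_zero] at h
        exact (mul_ne_zero (X_ne_zero _) (X_ne_zero _)) h
      · exact h
    -- normal form is zero
    have hsub := sub_N_mem p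
    have hψNp : aeval (F k) (N p) = 0 := by
      obtain ⟨t, ht⟩ := Ideal.mem_span_singleton.1 hsub
      have : aeval (F k) (p - N p) = 0 := by
        rw [ht, map_mul]
        have : aeval (F k) ((X 0 : MvPolynomial (Fin 4) k) * X 2 - X 1 * X 3) = 0 := by
          simp only [map_sub, map_mul, aeval_X, F, Matrix.cons_val_zero, Matrix.cons_val_one,
            Matrix.head_cons, Matrix.cons_val_two, Matrix.tail_cons, Matrix.cons_val_three]
          ring
        rw [this, zero_mul]
      rw [map_sub, hψp, zero_sub, neg_eq_zero] at this
      exact this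
    have hNp : N p = 0 := good_psi_zero _ (N_support_good p) hψNp
    rw [hNp, sub_zero] at hsub
    exact Submodule.mem_sup_right hsub
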